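/- If F : H → H is strongly monotone with constant η > 0 and Lipschitz continuous with constant L on a convex set U, and z* ∈ U satisfies F(z*) = 0, and V ⊆ H is a closed subspace with orthogonal projection P such that there exists z_d ∈ V ∩ U with P F(z_d) = 0, then ‖z_d − z*‖ ≤ (L/η) · dist(z*, V). -/

import Mathlib

open scoped RealInnerProductSpace

/-- quasi-optimality of a Galerkin solution for a strongly monotone,
Lipschitz map. -/
theorem galerkin_quasi_optimality
    {H : Type*} [NormedAddCommGroup H] [InnerProductSpace ℝ H] [CompleteSpace H]
    (F : H → H) (U : Set H) (hU : Convex ℝ U) (η L : ℝ) (hη : 0 < η) (hL : 0 < L)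
    (hmono : ∀ z₁ ∈ U, ∀ z₂ ∈ U, η * ‖z₁ - z₂‖ ^ 2 ≤ ⟪F z₁ - F z₂, z₁ - z₂⟫)
    (hlip : ∀ z₁ ∈ U, ∀ z₂ ∈ U, ‖F z₁ - F z₂‖ ≤ L * ‖z₁ - z₂‖)
    (zs : H) (hzs : zs ∈ U) (hFzs : F zs = 0)
    (V : Submodule ℝ H) [V.HasOrthogonalProjection]
    (zd : H) (hzdV : zd ∈ V) (hzdU : zd ∈ U)
    (hgal : Submodule.orthogonalProjectionOnto V (F zd) = 0) :
    ‖zd - zs‖ ≤ (L / η) * Metric.infDist zs (V : Set H) := by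
  have hFperp : F zd ∈ Vᗮ := Submodule.orthogonalProjectionOnto_eq_zero_iff.mp hgal
  by_cases hzz : zd = zs
  · have h0 : 0 ≤ Metric.infDist zs (V : Set H) := Metric.infDist_nonneg
    have : 0 ≤ (L / η) * Metric.infDist zs (V : Set H) :=
      mul_nonneg (le_of_lt (div_pos hL hη)) h0
    simpa [hzz] using this
  · have hne : (0:ℝ) < ‖zd - zs‖ := by
      rw [norm_pos_iff, sub_ne_zero]; exact hzz
    have key : ∀ v ∈ (V : Set H), (η / L) * ‖zd - zs‖ ≤ dist zs v := by
      intro v hv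
      have h1 : η * ‖zd - zs‖ ^ 2 ≤ ⟪F zd - F zs, zd - zs⟫ := hmono zd hzdU zs hzs
      have horth : ⟪F zd, zd - v⟫ = 0 := by
        rw [real_inner_comm]; exact hFperp (zd - v) (V.sub_mem hzdV hv)
      have h2 : ⟪F zd - F zs, zd - zs⟫ = ⟪F zd, v - zs⟫ := by
        have hsplit : ⟪F zd, zd - zs⟫ = ⟪F zd, zd - v⟫ + ⟪F zd, v - zs⟫ := by
          rw [← inner_add_right]; congr 1; abel
        simp [hFzs, hsplit, horth]
      have h3 : ⟪F zd, v - zs⟫ ≤ ‖F zd‖ * ‖v - zs‖ := real_inner_le_norm _ _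
      have h4 : ‖F zd‖ ≤ L * ‖zd - zs‖ := by
        have := hlip zd hzdU zs hzs
        simpa [hFzs] using this
      have h5 : η * ‖zd - zs‖ ^ 2 ≤ L * ‖zd - zs‖ * ‖v - zs‖ := by
        calc η * ‖zd - zs‖ ^ 2 ≤ ‖F zd‖ * ‖v - zs‖ := (h1.trans_eq h2).trans h3
          _ ≤ L * ‖zd - zs‖ * ‖v - zs‖ :=
            mul_le_mul_of_nonneg_right h4 (norm_nonneg _)
      have h6 : η * ‖zd - zs‖ ≤ L * ‖v - zs‖ := by nlinarith
      rw [dist_eq_norm, div_mul_eq_mul_div, div_le_iff₀ hL, norm_sub_rev zs v]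
      linarith
    have hVne : (V : Set H).Nonempty := ⟨0, V.zero_mem⟩
    have hinf : (η / L) * ‖zd - zs‖ ≤ Metric.infDist zs (V : Set H) := by
      by_contra h
      push_neg at h
      obtain ⟨y, hy, hdy⟩ := (Metric.infDist_lt_iff hVne).mp h
      exact absurd (key y hy) (not_le.mpr hdy)
    calc ‖zd - zs‖ = (L / η) * ((η / L) * ‖zd - zs‖) := by field_simp
      _ ≤ (L / η) * Metric.infDist zs (V : Set H) :=
          mul_le_mul_of_nonneg_left hinf (le_of_lt (div_pos hL hη))
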